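/- arXiv:1609.07167 — 4 statements merged into one kernel-verified Lean document; each statement's English description precedes it below -/
import Mathlib

section
/- Every join-subsemilattice P of [ω]^{<ω} either contains [ω]^{<ω} as a join-subsemilattice or is well-quasi-ordered; in the latter case J(P) is well-founded. -/
/-- Finite subsets of `α`, ordered by inclusion; `[α]^{<ω}`. -/
def FinSets (α : Type*) : Type _ := {S : Set α // S.Finite}

instance {α : Type*} : PartialOrder (FinSets α) :=
  inferInstanceAs (PartialOrder {S : Set α // S.Finite})

instance {α : Type*} : SemilatticeSup (FinSets α) :=
  { (inferInstance : PartialOrder (FinSets α)) with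
    sup := fun S T => ⟨S.1 ∪ T.1, S.2.union T.2⟩
    le_sup_left := fun S T => Set.subset_union_left (s := S.1) (t := T.1)
    le_sup_right := fun S T => Set.subset_union_right (s := S.1) (t := T.1)
    sup_le := fun _ _ _ h1 h2 => Set.union_subset h1 h2 }
/-- An ideal of a poset: a nonempty up-directed initial segment. -/
def IsIdeal {α : Type*} [Preorder α] (I : Set α) : Prop :=
  I.Nonempty ∧ (∀ ⦃x y : α⦄, x ≤ y → y ∈ I → x ∈ I) ∧
    ∀ x ∈ I, ∀ y ∈ I, ∃ z ∈ I, x ≤ z ∧ y ≤ z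

namespace Stmt13Aux

open Set Filter

noncomputable section

open scoped Classical

/-- The hyperfilter on ℕ. -/
abbrev U : Ultrafilter ℕ := Filter.hyperfilter ℕ

/-- the `U`-limit set of the sequence `a` -/
def Lset (a : ℕ → FinSets ℕ) : Set ℕ := {x | {n | x ∈ (a n).1} ∈ U}

/-- finite union of the sets mentioned in the history list -/
def Fset (a : ℕ → FinSets ℕ) (l : List (ℕ × ℕ)) : Set ℕ := {y | ∃ p ∈ l, y ∈ (a p.1).1}

/-- indices avoiding all points chosen so far -/
def Tset (a : ℕ → FinSets ℕ) (l : List (ℕ × ℕ)) : Set ℕ := {m | ∀ p ∈ l, p.2 ∉ (a m).1}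

lemma Fset_finite (a : ℕ → FinSets ℕ) (l : List (ℕ × ℕ)) : (Fset a l).Finite := by
  induction l with
  | nil =>
    have h : Fset a [] = ∅ := by ext y; simp [Fset]
    rw [h]; exact Set.finite_empty
  | cons p l ih =>
    have h : Fset a (p :: l) = (a p.1).1 ∪ Fset a l := by
      ext y
      simp only [Fset, List.mem_cons, Set.mem_setOf_eq, Set.mem_union]
      constructor
      · rintro ⟨q, (rfl | hq), hy⟩
        · exact Or.inl hy
        · exact Or.inr ⟨q, hq, hy⟩
      · rintro (hy | ⟨q, hq, hy⟩)
        · exact ⟨p, Or.inl rfl, hy⟩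
        · exact ⟨q, Or.inr hq, hy⟩
    rw [h]; exact (a p.1).2.union ih

/-- Key claim: if `a` is an antichain then for any finite `F` the set of indices whose
set is contained in `Lset a ∪ F` is not `U`-large. -/
lemma key (a : ℕ → FinSets ℕ) (hanti : ∀ m n, m ≠ n → ¬ a m ≤ a n) {F : Set ℕ}
    (hF : F.Finite) :
    {n | (a n).1 ⊆ Lset a ∪ F} ∉ U := by
  induction F, hF using Set.Finite.induction_on with
  | empty =>
    intro h
    rw [show Lset a ∪ (∅ : Set ℕ) = Lset a from Set.union_empty _] at h
    obtain ⟨n₀, hn₀⟩ := Ultrafilter.nonempty_of_mem h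
    have hT : {m | (a n₀).1 ⊆ (a m).1} ∈ U := by
      have he : {m | (a n₀).1 ⊆ (a m).1} = ⋂ x ∈ (a n₀).1, {m | x ∈ (a m).1} := by
        ext m; simp [Set.subset_def]
      rw [he]
      exact (Filter.biInter_mem (a n₀).2).2 fun x hx => hn₀ hx
    have hT' : ({m | (a n₀).1 ⊆ (a m).1} ∩ {n₀}ᶜ) ∈ U :=
      Filter.inter_mem hT
        (Ultrafilter.compl_mem_iff_notMem.2 ((Set.finite_singleton n₀).notMem_hyperfilter))
    obtain ⟨m, hm1, hm2⟩ := Ultrafilter.nonempty_of_mem hT'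
    exact hanti n₀ m (fun he => hm2 (by simp [he.symm])) hm1
  | insert hxF hFfin ih =>
    rename_i x F
    intro h
    by_cases hx : {n | x ∈ (a n).1} ∈ U
    · apply ih
      apply Filter.mem_of_superset h
      intro n hn y hy
      rcases hn hy with hL | hF'
      · exact Or.inl hL
      · rcases hF' with rfl | hF''
        · exact Or.inl hx
        · exact Or.inr hF''
    · have hx' : {n | x ∉ (a n).1} ∈ U := by
        have h2 : {n | x ∈ (a n).1}ᶜ ∈ U := Ultrafilter.compl_mem_iff_notMem.2 hx
        simpa [Set.compl_setOf] using h2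
      apply ih
      apply Filter.mem_of_superset (Filter.inter_mem h hx')
      rintro n ⟨hn1, hn2⟩ y hy
      rcases hn1 hy with hL | hF'
      · exact Or.inl hL
      · rcases hF' with rfl | hF''
        · exact absurd hy hn2
        · exact Or.inr hF''

/-- One step of the recursive choice. -/
lemma step (a : ℕ → FinSets ℕ) (hanti : ∀ m n, m ≠ n → ¬ a m ≤ a n) {T : Set ℕ}
    (hT : T ∈ U) {F : Set ℕ} (hF : F.Finite) :
    ∃ nx : ℕ × ℕ, nx.1 ∈ T ∧ nx.2 ∈ (a nx.1).1 ∧ nx.2 ∉ Lset a ∧ nx.2 ∉ F := by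
  have h1 : {n | ¬ (a n).1 ⊆ Lset a ∪ F} ∈ U := by
    have h2 := Ultrafilter.compl_mem_iff_notMem.2 (key a hanti hF)
    simpa [Set.compl_setOf] using h2
  obtain ⟨n, hnT, hn⟩ := Ultrafilter.nonempty_of_mem (Filter.inter_mem hT h1)
  obtain ⟨x, hx1, hx2⟩ := Set.not_subset.1 hn
  exact ⟨(n, x), hnT, hx1, fun hL => hx2 (Or.inl hL), fun hF' => hx2 (Or.inr hF')⟩

/-- Next pair chosen given the history list. -/
def nxt (a : ℕ → FinSets ℕ) (l : List (ℕ × ℕ)) : ℕ × ℕ :=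
  if h : Tset a l ∈ U ∧ ∀ m n, m ≠ n → ¬ a m ≤ a n then
    Classical.choose (step a h.2 h.1 (Fset_finite a l))
  else (0, 0)

/-- History of chosen pairs. -/
def hist (a : ℕ → FinSets ℕ) : ℕ → List (ℕ × ℕ)
  | 0 => []
  | i + 1 => hist a i ++ [nxt a (hist a i)]

lemma nxt_spec (a : ℕ → FinSets ℕ) {l : List (ℕ × ℕ)} (h1 : Tset a l ∈ U)
    (hanti : ∀ m n, m ≠ n → ¬ a m ≤ a n) :
    (nxt a l).1 ∈ Tset a l ∧ (nxt a l).2 ∈ (a (nxt a l).1).1 ∧ (nxt a l).2 ∉ Lset a ∧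
      (nxt a l).2 ∉ Fset a l := by
  rw [nxt, dif_pos ⟨h1, hanti⟩]
  exact Classical.choose_spec (step a hanti h1 (Fset_finite a l))

lemma inv (a : ℕ → FinSets ℕ) (hanti : ∀ m n, m ≠ n → ¬ a m ≤ a n) :
    ∀ i, Tset a (hist a i) ∈ U ∧ ∀ p ∈ hist a i, p.2 ∉ Lset a := by
  intro i
  induction i with
  | zero =>
    constructor
    · have h : Tset a (hist a 0) = Set.univ := by
        ext m; simp [Tset, hist]
      rw [h]; exact Filter.univ_mem
    · intro p hp; simp [hist] at hp
  | succ i ih =>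
    obtain ⟨hT, hL⟩ := ih
    obtain ⟨hs1, hs2, hs3, hs4⟩ := nxt_spec a hT hanti
    constructor
    · have hsub : Tset a (hist a i) ∩ {m | (nxt a (hist a i)).2 ∉ (a m).1}
          ⊆ Tset a (hist a (i + 1)) := by
        rintro m ⟨hm1, hm2⟩ p hp
        rw [hist, List.mem_append] at hp
        rcases hp with hp | hp
        · exact hm1 p hp
        · simp at hp; rw [hp]; exact hm2
      refine Filter.mem_of_superset (Filter.inter_mem hT ?_) hsub
      have h2 : {m | (nxt a (hist a i)).2 ∈ (a m).1}ᶜ ∈ U :=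
        Ultrafilter.compl_mem_iff_notMem.2 hs3
      simpa [Set.compl_setOf] using h2
    · intro p hp
      rw [hist, List.mem_append] at hp
      rcases hp with hp | hp
      · exact hL p hp
      · simp at hp; rw [hp]; exact hs3

lemma hist_mono (a : ℕ → FinSets ℕ) (i j : ℕ) (hij : i ≤ j) :
    ∀ p ∈ hist a i, p ∈ hist a j := by
  induction j with
  | zero =>
    intro p hp
    have : i = 0 := by omega
    rw [← this]; exact hp
  | succ j ih =>
    intro p hp
    rcases Nat.lt_or_ge i (j + 1) with h | h
    · rw [hist, List.mem_append]
      exact Or.inl (ih (by omega) p hp)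
    · have h2 : i = j + 1 := by omega
      rw [← h2]; exact hp

lemma mem_hist (a : ℕ → FinSets ℕ) (i j : ℕ) (hij : i < j) :
    nxt a (hist a i) ∈ hist a j := by
  apply hist_mono a (i + 1) j hij
  rw [hist, List.mem_append]
  exact Or.inr (by simp)

/-- The separated family extraction. -/
lemma separated (a : ℕ → FinSets ℕ) (hanti : ∀ m n, m ≠ n → ¬ a m ≤ a n) :
    ∃ n x : ℕ → ℕ, ∀ i, x i ∈ (a (n i)).1 ∧ ∀ j, j ≠ i → x i ∉ (a (n j)).1 := by
  refine ⟨fun i => (nxt a (hist a i)).1, fun i => (nxt a (hist a i)).2, fun i => ?_⟩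
  obtain ⟨hT, _⟩ := inv a hanti i
  obtain ⟨hs1, hs2, hs3, hs4⟩ := nxt_spec a hT hanti
  refine ⟨hs2, fun j hji hmem => ?_⟩
  rcases Nat.lt_or_ge j i with h | h
  · -- j < i : x i ∉ Fset (hist i), but a (n j) ⊆ Fset (hist i)
    exact hs4 ⟨nxt a (hist a j), mem_hist a j i h, hmem⟩
  · have h' : i < j := by omega
    -- i < j : n j ∈ Tset (hist j) and (n i, x i) ∈ hist j
    obtain ⟨hTj, _⟩ := inv a hanti j
    obtain ⟨ht1, _, _, _⟩ := nxt_spec a hTj hanti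
    exact ht1 (nxt a (hist a i)) (mem_hist a i j h') hmem

end

end Stmt13Aux

open Stmt13Aux in
/-- Case of an infinite antichain: build a semilattice copy of `[ω]^{<ω}` inside `P`. -/
lemma stmt_13_embed (P : Set (FinSets ℕ)) (hP : ∀ a ∈ P, ∀ b ∈ P, a ⊔ b ∈ P)
    (A : Set (FinSets ℕ)) (hAP : A ⊆ P) (hAinf : A.Infinite)
    (hA : IsAntichain (· ≤ ·) A) :
    ∃ f : FinSets ℕ → FinSets ℕ, Function.Injective f ∧ (∀ a, f a ∈ P) ∧
      ∀ a b, f (a ⊔ b) = f a ⊔ f b := by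
  classical
  let e := hAinf.natEmbedding
  set a : ℕ → FinSets ℕ := fun k => (e k).1 with ha
  have haP : ∀ k, a k ∈ P := fun k => hAP (e k).2
  have hinj : Function.Injective a := fun m n h => e.injective (Subtype.ext h)
  have hanti : ∀ m n, m ≠ n → ¬ a m ≤ a n := by
    intro m n hmn
    exact hA (e m).2 (e n).2 (fun he => hmn (hinj he))
  obtain ⟨n, x, hsep⟩ := separated a hanti
  set c : ℕ → FinSets ℕ := fun i => a (n i) with hc
  have hcP : ∀ i, c i ∈ P := fun i => haP (n i)
  have hxc : ∀ i, x i ∈ (c i).1 := fun i => (hsep i).1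
  have hxc' : ∀ i j, j ≠ i → x i ∉ (c j).1 := fun i j h => (hsep i).2 j h
  set f : FinSets ℕ → FinSets ℕ := fun S =>
    ⟨(c 0).1 ∪ ⋃ i ∈ S.1, (c (i + 1)).1,
      (c 0).2.union (S.2.biUnion fun i _ => (c (i + 1)).2)⟩ with hf
  have hval : ∀ S : FinSets ℕ, (f S).1 = (c 0).1 ∪ ⋃ i ∈ S.1, (c (i + 1)).1 := fun S => rfl
  have hsupval : ∀ A B : FinSets ℕ, (A ⊔ B).1 = A.1 ∪ B.1 := fun _ _ => rfl
  refine ⟨f, ?_, ?_, ?_⟩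
  · -- injectivity
    have haux : ∀ S T : FinSets ℕ, (f S).1 = (f T).1 → ∀ i ∈ S.1, i ∈ T.1 := by
      intro S T hST i hiS
      have hx1 : x (i + 1) ∈ (f S).1 := by
        rw [hval]
        exact Or.inr (Set.mem_biUnion hiS (hxc (i + 1)))
      rw [hST, hval] at hx1
      rcases hx1 with h0 | hU
      · exact absurd h0 (hxc' (i + 1) 0 (by omega))
      · obtain ⟨j, hjT, hj⟩ := Set.mem_iUnion₂.1 hU
        by_cases hji : j = i
        · rw [← hji]; exact hjT
        · exact absurd hj (hxc' (i + 1) (j + 1) (by omega))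
    intro S T hST
    apply Subtype.ext
    apply Set.eq_of_subset_of_subset
    · exact fun i hi => haux S T (congrArg Subtype.val hST) i hi
    · exact fun i hi => haux T S (congrArg Subtype.val hST).symm i hi
  · -- membership in P
    intro S
    have hmem : ∀ (s : Set ℕ), s.Finite →
        ∃ q ∈ P, q.1 = (c 0).1 ∪ ⋃ i ∈ s, (c (i + 1)).1 := by
      intro s hs
      induction s, hs using Set.Finite.induction_on with
      | empty => exact ⟨c 0, hcP 0, by simp⟩
      | insert hks hsfin ih =>
        rename_i k s
        obtain ⟨q, hqP, hq⟩ := ih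
        refine ⟨c (k + 1) ⊔ q, hP _ (hcP (k + 1)) _ hqP, ?_⟩
        rw [hsupval, hq]
        ext y
        simp only [Set.mem_union, Set.mem_iUnion, Set.mem_insert_iff, exists_prop]
        constructor
        · rintro (h | (h | ⟨j, hj, hy⟩))
          · exact Or.inr ⟨k, Or.inl rfl, h⟩
          · exact Or.inl h
          · exact Or.inr ⟨j, Or.inr hj, hy⟩
        · rintro (h | ⟨j, (rfl | hj), hy⟩)
          · exact Or.inr (Or.inl h)
          · exact Or.inl hy
          · exact Or.inr (Or.inr ⟨j, hj, hy⟩)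
    obtain ⟨q, hqP, hq⟩ := hmem S.1 S.2
    have : q = f S := Subtype.ext (by rw [hq, hval])
    rw [← this]; exact hqP
  · -- join-preserving
    intro S T
    apply Subtype.ext
    rw [hsupval, hval, hval, hval, hsupval]
    ext y
    simp only [Set.mem_union, Set.mem_iUnion, exists_prop]
    constructor
    · rintro (h | ⟨j, (hj | hj), hy⟩)
      · exact Or.inl (Or.inl h)
      · exact Or.inl (Or.inr ⟨j, hj, hy⟩)
      · exact Or.inr (Or.inr ⟨j, hj, hy⟩)
    · rintro ((h | ⟨j, hj, hy⟩) | (h | ⟨j, hj, hy⟩))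
      · exact Or.inl h
      · exact Or.inr ⟨j, Or.inl hj, hy⟩
      · exact Or.inl h
      · exact Or.inr ⟨j, Or.inr hj, hy⟩

/-- every join-subsemilattice `P` of `[ω]^{<ω}` either contains `[ω]^{<ω}` as a
join-subsemilattice or is well-quasi-ordered, in which case `J(P)` is well-founded. -/
theorem stmt_13 (P : Set (FinSets ℕ)) (hP : ∀ a ∈ P, ∀ b ∈ P, a ⊔ b ∈ P) :
    (∃ f : FinSets ℕ → FinSets ℕ, Function.Injective f ∧ (∀ a, f a ∈ P) ∧
        ∀ a b, f (a ⊔ b) = f a ⊔ f b) ∨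
      ((WellFounded ((· < ·) : ↥P → ↥P → Prop) ∧
          ¬ ∃ A ⊆ P, A.Infinite ∧ IsAntichain (· ≤ ·) A) ∧
        WellFounded ((· < ·) : {I : Set ↥P // IsIdeal I} → {I : Set ↥P // IsIdeal I} → Prop)) := by
  classical
  by_cases hac : ∃ A ⊆ P, A.Infinite ∧ IsAntichain (· ≤ ·) A
  · obtain ⟨A, hAP, hAinf, hA⟩ := hac
    exact Or.inl (stmt_13_embed P hP A hAP hAinf hA)
  · right
    -- well-foundedness of `<` on `P`
    have hwf : WellFounded ((· < ·) : ↥P → ↥P → Prop) := by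
      have hsub : Subrelation ((· < ·) : ↥P → ↥P → Prop)
          (InvImage (· < ·) (fun p : ↥P => p.1.1.ncard)) := by
        intro p q h
        have h1 : p.1.1 ⊂ q.1.1 := by
          rw [lt_iff_le_not_ge] at h
          exact ssubset_iff_subset_not_subset.mpr ⟨h.1, h.2⟩
        exact Set.ncard_lt_ncard h1 q.1.2
      exact Subrelation.wf hsub (InvImage.wf _ Nat.lt_wfRel.wf)
    -- partial well order property
    have hpwo : ∀ f : ℕ → ↥P, ∃ m n : ℕ, m < n ∧ f m ≤ f n := by
      intro f
      by_contra H
      push_neg at H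
      haveI : IsTrans ↥P (fun p q => q ≤ p) := ⟨fun _ _ _ h1 h2 => le_trans h2 h1⟩
      obtain ⟨g, hg | hg⟩ :=
        exists_increasing_or_nonincreasing_subseq (fun p q : ↥P => q ≤ p) f
      · -- infinite strictly descending sequence: contradicts well-foundedness
        have hdesc : ∀ k, f (g (k + 1)) < f (g k) := fun k =>
          lt_of_le_not_ge (hg k (k + 1) (Nat.lt_succ_self k))
            (H (g k) (g (k + 1)) (g.strictMono (Nat.lt_succ_self k)))
        exact RelEmbedding.not_wellFounded
          (RelEmbedding.natGT (fun k => f (g k)) hdesc) hwf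
      · -- infinite antichain : contradicts `hac`
        apply hac
        have hinj : Function.Injective (fun k => ((f (g k)) : FinSets ℕ)) := by
          intro m n hmn
          by_contra hne
          have hfeq : f (g m) = f (g n) := Subtype.ext hmn
          rcases Ne.lt_or_gt hne with h | h
          · exact H (g m) (g n) (g.strictMono h) (le_of_eq hfeq)
          · exact H (g n) (g m) (g.strictMono h) (le_of_eq hfeq.symm)
        refine ⟨Set.range (fun k => ((f (g k)) : FinSets ℕ)), ?_, ?_, ?_⟩
        · rintro _ ⟨k, rfl⟩; exact (f (g k)).2
        · exact Set.infinite_range_of_injective hinj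
        · rintro _ ⟨m, rfl⟩ _ ⟨n, rfl⟩ hne hle
          have hmn : m ≠ n := fun h => hne (by rw [h])
          have hle' : f (g m) ≤ f (g n) := hle
          rcases Ne.lt_or_gt hmn with h | h
          · exact H (g m) (g n) (g.strictMono h) hle'
          · exact hg n m h hle'
    refine ⟨⟨hwf, hac⟩, ?_⟩
    -- well-foundedness of the poset of ideals
    rw [RelEmbedding.wellFounded_iff_isEmpty]
    refine ⟨fun emb => ?_⟩
    have hmono : ∀ i j : ℕ, i < j → emb j < emb i := fun i j h => emb.map_rel_iff.2 h
    have hsub : ∀ i j : ℕ, i ≤ j → (emb j).1 ⊆ (emb i).1 := by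
      intro i j hij
      rcases eq_or_lt_of_le hij with rfl | h
      · exact subset_rfl
      · exact le_of_lt (hmono i j h)
    have hw : ∀ k : ℕ, ∃ p : ↥P, p ∈ (emb k).1 ∧ p ∉ (emb (k + 1)).1 := by
      intro k
      have hlt : emb (k + 1) < emb k := hmono k (k + 1) (Nat.lt_succ_self k)
      rw [lt_iff_le_not_ge] at hlt
      obtain ⟨p, hp1, hp2⟩ := Set.not_subset.1 (fun hss => hlt.2 hss)
      exact ⟨p, hp1, hp2⟩
    choose p hp1 hp2 using hw
    obtain ⟨m, n, hmn, hle⟩ := hpwo p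
    exact hp2 m ((emb (m + 1)).2.2.1 hle (hsub (m + 1) n hmn (hp1 n)))
end

section
/- Let P be a join-semilattice with least element such that for every x ∈ P the set φ_Δ(x) of completely meet-irreducible ideals of P not containing x is finite. Then P embeds as a join-subsemilattice into [E]^{<ω} for some set E, and conversely any join-semilattice embedding as a join-subsemilattice into some [E]^{<ω} has this property. -/
/-- `A` embeds into `B` as a join-subsemilattice: an injective map preserving binary joins. -/
def JoinEmbeds (A B : Type*) [SemilatticeSup A] [SemilatticeSup B] : Prop :=
  ∃ f : A → B, Function.Injective f ∧ ∀ x y : A, f (x ⊔ y) = f x ⊔ f y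

universe u

/-- A completely meet-irreducible ideal: an ideal distinct from the intersection of the
ideals strictly containing it. -/
def CMIdeal {P : Type*} [Preorder P] (I : Set P) : Prop :=
  IsIdeal I ∧ I ≠ ⋂₀ {J : Set P | IsIdeal J ∧ I ⊂ J}

section Aux
variable {P : Type*} [SemilatticeSup P]

lemma ideal_sup_mem {I : Set P} (hI : IsIdeal I) {x y : P} (hx : x ∈ I) (hy : y ∈ I) :
    x ⊔ y ∈ I := by
  obtain ⟨z, hz, hxz, hyz⟩ := hI.2.2 x hx y hy
  exact hI.2.1 (sup_le hxz hyz) hz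

lemma exists_cmi {x y : P} (h : ¬ x ≤ y) :
    ∃ I : Set P, CMIdeal I ∧ y ∈ I ∧ x ∉ I := by
  set S : Set (Set P) := {I | IsIdeal I ∧ y ∈ I ∧ x ∉ I} with hS
  have h0 : {z : P | z ≤ y} ∈ S :=
    ⟨⟨⟨y, le_refl y⟩, fun a b hab hb => hab.trans hb,
      fun a ha b hb => ⟨y, le_refl y, ha, hb⟩⟩, le_refl y, h⟩
  obtain ⟨M, -, hMS, hMmax⟩ := zorn_subset_nonempty S (fun c hcS hchain hcne => by
    refine ⟨⋃₀ c, ⟨⟨?_, ?_, ?_⟩, ?_, ?_⟩, fun s hs => Set.subset_sUnion_of_mem hs⟩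
    · obtain ⟨I, hI⟩ := hcne
      exact ⟨y, I, hI, (hcS hI).2.1⟩
    · rintro a b hab ⟨I, hI, hbI⟩
      exact ⟨I, hI, (hcS hI).1.2.1 hab hbI⟩
    · rintro a ⟨I, hI, haI⟩ b ⟨J, hJ, hbJ⟩
      rcases hchain.total hI hJ with hIJ | hJI
      · obtain ⟨z, hz, h1, h2⟩ := (hcS hJ).1.2.2 a (hIJ haI) b hbJ
        exact ⟨z, ⟨J, hJ, hz⟩, h1, h2⟩
      · obtain ⟨z, hz, h1, h2⟩ := (hcS hI).1.2.2 a haI b (hJI hbJ)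
        exact ⟨z, ⟨I, hI, hz⟩, h1, h2⟩
    · obtain ⟨I, hI⟩ := hcne
      exact ⟨I, hI, (hcS hI).2.1⟩
    · rintro ⟨I, hI, hxI⟩
      exact (hcS hI).2.2 hxI) _ h0
  obtain ⟨hMideal, hyM, hxM⟩ := hMS
  refine ⟨M, ⟨hMideal, fun heq => hxM ?_⟩, hyM, hxM⟩
  rw [heq]
  rintro J ⟨hJideal, hMJ⟩
  by_contra hxJ
  exact hMJ.not_subset (hMmax ⟨hJideal, hMJ.subset hyM, hxJ⟩ hMJ.subset)

lemma ideal_omits_sup {I : Set P} (hI : IsIdeal I) {x y : P} :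
    (x ⊔ y ∉ I) ↔ (x ∉ I ∨ y ∉ I) := by
  constructor
  · intro h
    by_contra hc
    push_neg at hc
    exact h (ideal_sup_mem hI hc.1 hc.2)
  · rintro (h | h) hmem
    · exact h (hI.2.1 le_sup_left hmem)
    · exact h (hI.2.1 le_sup_right hmem)

lemma ideal_join_elem {I : Set P} (hI : IsIdeal I) (z : P) :
    IsIdeal {w : P | ∃ a ∈ I, w ≤ a ⊔ z} := by
  refine ⟨?_, ?_, ?_⟩
  · obtain ⟨a, ha⟩ := hI.1
    exact ⟨a, a, ha, le_sup_left⟩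
  · rintro u v huv ⟨a, ha, hv⟩
    exact ⟨a, ha, huv.trans hv⟩
  · rintro u ⟨a, ha, hu⟩ v ⟨b, hb, hv⟩
    obtain ⟨c, hc, hac, hbc⟩ := hI.2.2 a ha b hb
    exact ⟨c ⊔ z, ⟨c, hc, le_refl _⟩, hu.trans (sup_le_sup_right hac z),
      hv.trans (sup_le_sup_right hbc z)⟩

lemma cmi_key {I : Set P} (hI : CMIdeal I) {p : P}
    (hp : p ∈ ⋂₀ {J : Set P | IsIdeal J ∧ I ⊂ J}) {z : P} (hz : z ∉ I) :
    ∃ a ∈ I, p ≤ a ⊔ z := by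
  have hJ : IsIdeal {w : P | ∃ a ∈ I, w ≤ a ⊔ z} := ideal_join_elem hI.1 z
  have hsub : I ⊂ {w : P | ∃ a ∈ I, w ≤ a ⊔ z} := by
    constructor
    · intro a ha; exact ⟨a, ha, le_sup_left⟩
    · intro hback
      obtain ⟨a, ha⟩ := hI.1.1
      exact hz (hback ⟨a, ha, le_sup_right⟩)
  exact hp _ ⟨hJ, hsub⟩

lemma cmi_witness {I : Set P} (hI : CMIdeal I) :
    ∃ p, p ∈ ⋂₀ {J : Set P | IsIdeal J ∧ I ⊂ J} ∧ p ∉ I := by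
  have hsub : I ⊆ ⋂₀ {J : Set P | IsIdeal J ∧ I ⊂ J} := by
    rintro a ha J ⟨-, hIJ⟩; exact hIJ.subset ha
  rcases Set.exists_of_ssubset (hsub.ssubset_of_ne hI.2) with ⟨p, hp1, hp2⟩
  exact ⟨p, hp1, hp2⟩

end Aux

/-- a join-semilattice `P` with least element embeds as a join-subsemilattice
into some `[E]^{<ω}` iff for every `x ∈ P` only finitely many completely meet-irreducible
ideals omit `x`. -/
theorem stmt_15 {P : Type u} [SemilatticeSup P] [OrderBot P] :
    (∀ x : P, {I : Set P | CMIdeal I ∧ x ∉ I}.Finite) ↔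
      ∃ E : Type u, JoinEmbeds P (FinSets E) := by
  constructor
  · intro hfin
    refine ⟨{I : Set P // CMIdeal I}, fun x => ⟨{I | x ∉ I.1}, ?_⟩, ?_, ?_⟩
    · have heq : {I : {J : Set P // CMIdeal J} | x ∉ I.1}
          = Subtype.val ⁻¹' {I : Set P | CMIdeal I ∧ x ∉ I} := by
        ext I; simp [I.2]
      rw [heq]
      exact (hfin x).preimage Subtype.val_injective.injOn
    · intro a b hab
      have hsets : {I : {J : Set P // CMIdeal J} | a ∉ I.1}
          = {I : {J : Set P // CMIdeal J} | b ∉ I.1} := congrArg Subtype.val hab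
      by_contra hne
      have hle : ¬ a ≤ b ∨ ¬ b ≤ a := by
        by_contra hc; push_neg at hc; exact hne (le_antisymm hc.1 hc.2)
      rcases hle with h | h
      · obtain ⟨I, hI, hbI, haI⟩ := exists_cmi h
        have h1 : (⟨I, hI⟩ : {J : Set P // CMIdeal J}) ∈ {I : {J : Set P // CMIdeal J} | a ∉ I.1} := haI
        rw [hsets] at h1
        exact h1 hbI
      · obtain ⟨I, hI, haI, hbI⟩ := exists_cmi h
        have h1 : (⟨I, hI⟩ : {J : Set P // CMIdeal J}) ∈ {I : {J : Set P // CMIdeal J} | b ∉ I.1} := hbI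
        rw [← hsets] at h1
        exact h1 haI
    · intro x y
      apply Subtype.ext
      ext I
      exact ideal_omits_sup I.2.1
  · rintro ⟨E, f, hinj, hsup⟩ x
    have hmono : ∀ a b : P, a ≤ b → (f a).1 ⊆ (f b).1 := by
      intro a b hab
      have h1 : f a ⊔ f b = f b := by rw [← hsup, sup_eq_right.mpr hab]
      have h2 : (f a).1 ∪ (f b).1 = (f b).1 := congrArg Subtype.val h1
      intro e he
      rw [← h2]; exact Or.inl he
    have hcover : ∀ (s : Set E), s.Finite → ∀ I : Set P, IsIdeal I →
        (∀ e ∈ s, ∃ a ∈ I, e ∈ (f a).1) → ∃ b ∈ I, s ⊆ (f b).1 := by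
      intro s hs
      refine Set.Finite.induction_on
        (motive := fun s _ => ∀ I : Set P, IsIdeal I →
          (∀ e ∈ s, ∃ a ∈ I, e ∈ (f a).1) → ∃ b ∈ I, s ⊆ (f b).1) s hs ?_ ?_
      · intro I hI _
        obtain ⟨a, ha⟩ := hI.1
        exact ⟨a, ha, by simp⟩
      · intro e s hes hsfin ih I hI h
        obtain ⟨b, hb, hsb⟩ := ih I hI (fun e' he' => h e' (Set.mem_insert_of_mem _ he'))
        obtain ⟨a, ha, hea⟩ := h e (Set.mem_insert _ _)
        obtain ⟨c, hc, hac, hbc⟩ := hI.2.2 a ha b hb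
        refine ⟨c, hc, ?_⟩
        rintro e' (rfl | he')
        · exact hmono a c hac hea
        · exact hmono b c hbc (hsb he')
    set A := {I : Set P | CMIdeal I ∧ x ∉ I} with hA
    have hkey : ∀ I, I ∈ A →
        ∃ e : E, (∀ a ∈ I, e ∉ (f a).1) ∧ (∀ z, z ∉ I → e ∈ (f z).1) := by
      rintro I ⟨hI, hxI⟩
      obtain ⟨p, hp, hpI⟩ := cmi_witness hI
      have he : ∃ e ∈ (f p).1, ∀ a ∈ I, e ∉ (f a).1 := by
        by_contra hc
        push_neg at hc
        obtain ⟨b, hb, hsb⟩ := hcover (f p).1 (f p).2 I hI.1 hc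
        have h3 : f (p ⊔ b) = f b := by
          rw [hsup]
          exact Subtype.ext (Set.union_eq_self_of_subset_left hsb)
        exact hpI (hI.1.2.1 (sup_eq_right.mp (hinj h3)) hb)
      obtain ⟨e, hep, heI⟩ := he
      refine ⟨e, heI, fun z hz => ?_⟩
      obtain ⟨a, ha, hpaz⟩ := cmi_key hI hp hz
      have h1 := hmono p (a ⊔ z) hpaz
      have h2 : (f (a ⊔ z)).1 = (f a).1 ∪ (f z).1 := congrArg Subtype.val (hsup a z)
      rw [h2] at h1
      rcases h1 hep with h | h
      · exact absurd h (heI a ha)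
      · exact h
    rcases Set.eq_empty_or_nonempty A with hAe | ⟨I0, hI0⟩
    · rw [hAe]; exact Set.finite_empty
    · classical
      choose g hg1 hg2 using hkey
      haveI : Nonempty E := ⟨g I0 hI0⟩
      set G : Set P → E := fun I => if h : I ∈ A then g I h else Classical.arbitrary E with hG
      apply Set.Finite.of_finite_image (f := G)
      · apply Set.Finite.subset (f x).2
        rintro e ⟨I, hI, rfl⟩
        simp only [hG, dif_pos hI]
        exact hg2 I hI x hI.2
      · intro I hI J hJ hGIJ
        simp only [hG, dif_pos hI, dif_pos hJ] at hGIJ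
        by_contra hne
        have hzex : (∃ z, z ∈ I ∧ z ∉ J) ∨ (∃ z, z ∈ J ∧ z ∉ I) := by
          by_contra hcc
          push_neg at hcc
          exact hne (Set.Subset.antisymm hcc.1 hcc.2)
        rcases hzex with ⟨z, hzI, hzJ⟩ | ⟨z, hzJ, hzI⟩
        · have h1 := hg2 J hJ z hzJ
          have h2 := hg1 I hI z hzI
          rw [hGIJ] at h2
          exact h2 h1
        · have h1 := hg2 I hI z hzI
          have h2 := hg1 J hJ z hzJ
          rw [← hGIJ] at h2
          exact h2 h1
end

section
/- Let P be a well-founded poset containing an infinite antichain. Then P contains an infinite antichain A such that: (1) for every x ∈ P, either x ≥ y for some y ∈ A, or x < y for all but finitely many y ∈ A; and (2) P \ ↑A is well-quasi-ordered, where ↑A = {x : x ≥ y for some y ∈ A}. -/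
/-- A chain of sets covering a finite set has a single member covering it. -/
theorem stmt17_chainAux {P : Type*} {c : Set (Set P)} (hc : IsChain (· ⊆ ·) c)
    (hne : c.Nonempty) {F : Set P} (hF : F.Finite) :
    F ⊆ ⋃₀ c → ∃ S ∈ c, F ⊆ S := by
  refine Set.Finite.induction_on (motive := fun F _ => F ⊆ ⋃₀ c → ∃ S ∈ c, F ⊆ S) F hF
    (fun _ => ⟨hne.choose, hne.choose_spec, by simp⟩) ?_
  intro a F' _ _ ih hsub
  obtain ⟨S, hS, hFS⟩ := ih (fun x hx => hsub (Set.mem_insert_of_mem _ hx))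
  obtain ⟨T, hT, haT⟩ := hsub (Set.mem_insert a F')
  rcases eq_or_ne S T with rfl | hST
  · exact ⟨S, hS, fun x hx => by rcases hx with rfl | hx; exacts [haT, hFS hx]⟩
  rcases hc hS hT hST with h' | h'
  · exact ⟨T, hT, fun x hx => by rcases hx with rfl | hx; exacts [haT, h' (hFS hx)]⟩
  · exact ⟨S, hS, fun x hx => by rcases hx with rfl | hx; exacts [h' haT, hFS hx]⟩

/-- a well-founded poset with an infinite antichain contains an infinite
antichain `A` such that every `x` is above a member of `A` or below all but finitely many
members of `A`, and `P \\ ↑A` is well-quasi-ordered. -/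
theorem stmt_17 {P : Type*} [PartialOrder P]
    (hwf : WellFounded ((· < ·) : P → P → Prop))
    (h : ∃ A : Set P, A.Infinite ∧ IsAntichain (· ≤ ·) A) :
    ∃ A : Set P, A.Infinite ∧ IsAntichain (· ≤ ·) A ∧
      (∀ x : P, (∃ y ∈ A, y ≤ x) ∨ {y ∈ A | ¬ x < y}.Finite) ∧
      ((∀ C ⊆ {x : P | ∀ y ∈ A, ¬ y ≤ x}, C.Nonempty → ∃ m ∈ C, ∀ b ∈ C, ¬ b < m) ∧
        ¬ ∃ B ⊆ {x : P | ∀ y ∈ A, ¬ y ≤ x}, B.Infinite ∧ IsAntichain (· ≤ ·) B) := by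
  classical
  obtain ⟨A0, hA0inf, hA0anti⟩ := h
  set 𝒮 : Set (Set P) := {S | (∀ ⦃x y : P⦄, x ∈ S → x ≤ y → y ∈ S) ∧
      ∀ F : Set P, F.Finite → S ≠ {x | ∃ f ∈ F, f ≤ x}} with h𝒮
  -- pigeonhole lemma: an infinite antichain cannot be covered by a suitable finite set
  have pigeon : ∀ (B : Set P), B.Infinite → IsAntichain (· ≤ ·) B →
      ∀ F : Set P, F.Finite → (∀ b ∈ B, ∃ f ∈ F, f ≤ b) →
      (∀ f ∈ F, (∃ a ∈ B, a ≤ f) ∨ (∀ b ∈ B, f ≤ b → False)) → False := by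
    intro B hBinf hBanti F hF hmap hback
    set g : P → P := fun a => if h : ∃ f ∈ F, f ≤ a then h.choose else a with hg
    have hgspec : ∀ a ∈ B, g a ∈ F ∧ g a ≤ a := by
      intro a ha
      have h' := hmap a ha
      simp only [hg, dif_pos h']
      exact ⟨h'.choose_spec.1, h'.choose_spec.2⟩
    have hmt : Set.MapsTo g B F := fun a ha => (hgspec a ha).1
    obtain ⟨a, ha, b, hb, hab, hgab⟩ := hBinf.exists_ne_map_eq_of_mapsTo hmt hF
    rcases hback _ (hgspec a ha).1 with ⟨c, hc, hcf⟩ | hbad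
    · have hca : c = a := by
        by_contra hne
        exact hBanti hc ha hne (hcf.trans (hgspec a ha).2)
      have hcb : c = b := by
        by_contra hne
        exact hBanti hc hb hne (hcf.trans (hgab ▸ (hgspec b hb).2))
      exact hab (hca ▸ hcb)
    · exact hbad a ha (hgspec a ha).2
  -- the upset of A0 is in 𝒮
  have hA0mem : {x | ∃ a ∈ A0, a ≤ x} ∈ 𝒮 := by
    refine ⟨fun x y hx hxy => ?_, fun F hF hEq => ?_⟩
    · obtain ⟨a, ha, hax⟩ := hx; exact ⟨a, ha, hax.trans hxy⟩
    · refine pigeon A0 hA0inf hA0anti F hF (fun b hb => ?_) (fun f hf => ?_)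
      · have : b ∈ {x | ∃ f ∈ F, f ≤ x} := hEq ▸ ⟨b, hb, le_refl b⟩
        exact this
      · left
        have : f ∈ {x | ∃ a ∈ A0, a ≤ x} := by
          rw [hEq]; exact ⟨f, hf, le_refl f⟩
        exact this
  -- Zorn's lemma
  have hub : ∀ c ⊆ 𝒮, IsChain (· ⊆ ·) c → c.Nonempty → ∃ ub ∈ 𝒮, ∀ s ∈ c, s ⊆ ub := by
    intro c hc hchain hcne
    refine ⟨⋃₀ c, ⟨fun x y hx hxy => ?_, fun F hF hEq => ?_⟩,
      fun s hs => Set.subset_sUnion_of_mem hs⟩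
    · obtain ⟨S, hS, hxS⟩ := hx
      exact ⟨S, hS, (hc hS).1 hxS hxy⟩
    · have hFsub : F ⊆ ⋃₀ c := by
        intro f hf
        have : f ∈ {x | ∃ f' ∈ F, f' ≤ x} := ⟨f, hf, le_refl f⟩
        exact hEq ▸ this
      obtain ⟨S, hS, hFS⟩ := stmt17_chainAux hchain hcne hF hFsub
      refine (hc hS).2 F hF ?_
      apply Set.Subset.antisymm
      · intro x hx
        have : x ∈ ⋃₀ c := Set.subset_sUnion_of_mem hS hx
        exact hEq ▸ this
      · rintro x ⟨f, hf, hfx⟩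
        exact (hc hS).1 (hFS hf) hfx
  obtain ⟨m, -, hmmax⟩ := zorn_subset_nonempty 𝒮 hub _ hA0mem
  obtain ⟨⟨hmup, hmnfg⟩, hmax⟩ := hmmax
  -- A := minimal elements of m
  set A : Set P := {a ∈ m | ∀ b ∈ m, ¬ b < a} with hA
  have hAm : A ⊆ m := fun a ha => ha.1
  -- every element of m is above some element of A
  have hkey : ∀ x ∈ m, ∃ a ∈ A, a ≤ x := by
    intro x hx
    obtain ⟨a, ⟨ham, hax⟩, hmin⟩ := hwf.has_min {y ∈ m | y ≤ x} ⟨x, hx, le_refl x⟩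
    refine ⟨a, ⟨ham, fun b hb hba => ?_⟩, hax⟩
    exact hmin b ⟨hb, hba.le.trans hax⟩ hba
  have hAanti : IsAntichain (· ≤ ·) A := by
    intro a ha b hb hab hle
    exact hb.2 a ha.1 (lt_of_le_of_ne hle hab)
  have hAinf : A.Infinite := by
    by_contra h'
    rw [Set.not_infinite] at h'
    have hAfin := h'
    refine hmnfg A hAfin ?_
    apply Set.Subset.antisymm
    · intro x hx
      obtain ⟨a, ha, hax⟩ := hkey x hx
      exact ⟨a, ha, hax⟩
    · rintro x ⟨a, ha, hax⟩
      exact hmup (hAm ha) hax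
  -- maximality consequence: a strictly larger up-closed set is finitely generated
  have hfg : ∀ T : Set P, (∀ ⦃x y : P⦄, x ∈ T → x ≤ y → y ∈ T) → m ⊆ T → ¬ T ⊆ m →
      ∃ F : Set P, F.Finite ∧ T = {x | ∃ f ∈ F, f ≤ x} := by
    intro T hTup hmT hTm
    by_contra hcon
    push_neg at hcon
    exact hTm (hmax ⟨hTup, fun F hF hEq => hcon F hF hEq⟩ hmT)
  refine ⟨A, hAinf, hAanti, ?_, ?_, ?_⟩
  · -- condition 1
    intro x
    by_cases hx : x ∈ m
    · left; exact hkey x hx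
    · right
      obtain ⟨F, hF, hEq⟩ := hfg (m ∪ {y | x ≤ y})
        (fun u v hu huv => hu.elim (fun h' => Or.inl (hmup h' huv))
          (fun h' => Or.inr (le_trans h' huv)))
        Set.subset_union_left
        (fun hTm => hx (hTm (Or.inr (le_refl x))))
      refine hF.subset ?_
      rintro y ⟨hyA, hynx⟩
      have hyT : y ∈ m ∪ {y | x ≤ y} := Or.inl (hAm hyA)
      rw [hEq] at hyT
      obtain ⟨f, hf, hfy⟩ := hyT
      have hfT : f ∈ m ∪ {y | x ≤ y} := by
        rw [hEq]; exact ⟨f, hf, le_refl f⟩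
      rcases hfT with hfm | hxf
      · obtain ⟨a, ha, haf⟩ := hkey f hfm
        have hay : a = y := by
          by_contra hne
          exact hAanti ha hyA hne (haf.trans hfy)
        have : f = y := le_antisymm hfy (hay ▸ haf)
        exact this ▸ hf
      · exfalso
        refine hynx (lt_of_le_of_ne (le_trans hxf hfy) ?_)
        rintro rfl
        exact hx (hAm hyA)
  · -- condition 2a : well-foundedness of the complement
    intro C _ hCne
    exact hwf.has_min C hCne
  · -- condition 2b : no infinite antichain in the complement
    rintro ⟨B, hBsub, hBinf, hBanti⟩
    have hBnm : ∀ b ∈ B, b ∉ m := by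
      intro b hb hbm
      obtain ⟨a, ha, hab⟩ := hkey b hbm
      exact hBsub hb a ha hab
    obtain ⟨b0, hb0⟩ := hBinf.nonempty
    obtain ⟨F, hF, hEq⟩ := hfg (m ∪ {x | ∃ b ∈ B, b ≤ x})
      (fun u v hu huv => hu.elim (fun h' => Or.inl (hmup h' huv))
        (fun h' => Or.inr ⟨h'.choose, h'.choose_spec.1, h'.choose_spec.2.trans huv⟩))
      Set.subset_union_left
      (fun hTm => hBnm b0 hb0 (hTm (Or.inr ⟨b0, hb0, le_refl b0⟩)))
    refine pigeon B hBinf hBanti F hF (fun b hb => ?_) (fun f hf => ?_)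
    · have : b ∈ m ∪ {x | ∃ b ∈ B, b ≤ x} := Or.inr ⟨b, hb, le_refl b⟩
      rw [hEq] at this
      exact this
    · have hfT : f ∈ m ∪ {x | ∃ b ∈ B, b ≤ x} := by
        rw [hEq]; exact ⟨f, hf, le_refl f⟩
      rcases hfT with hfm | hfB
      · exact Or.inr (fun b hb hfb => hBnm b hb (hmup hfm hfb))
      · exact Or.inl hfB
end

section
/- Let Δ be the set of pairs (i,j) with i < j ≤ ω, ordered by (i,j) ≤ (i',j') iff j ≤ i' or (i = i' and j ≤ j'), and let P be a meet-semilattice. Suppose f : Δ → P satisfies f(i,j) = f(i,ω) ∧ f(j,ω) for all i < j < ω. Then f is meet-preserving if and only if f is order-preserving, if and only if f(i,j) ≤ f(k,ω) for all i < j < k < ω, if and only if f(i,j) = f(i,k) ∧ f(j,k) for all i < j < k < ω. Moreover, such an f is injective if and only if f(i,j) < f(j,k) and f(i,j) < f(i,k) for all i < j < k < ω. -/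
/-- The poset `Δ`: pairs `(i,j)` with `i < j ≤ ω`, ordered by `(i,j) ≤ (i',j')` iff
`j ≤ i'` or (`i = i'` and `j ≤ j'`). -/
def DeltaP : Type := {p : ℕ × WithTop ℕ // (p.1 : WithTop ℕ) < p.2}

instance : PartialOrder DeltaP where
  le a b := a.1.2 ≤ (b.1.1 : WithTop ℕ) ∨ (a.1.1 = b.1.1 ∧ a.1.2 ≤ b.1.2)
  le_refl a := Or.inr ⟨rfl, le_refl _⟩
  le_trans a b c hab hbc := by
    rcases hab with h1 | ⟨h1, h1'⟩ <;> rcases hbc with h2 | ⟨h2, h2'⟩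
    · exact Or.inl (h1.trans (le_of_lt (lt_of_lt_of_le b.2 h2)))
    · exact Or.inl (h2 ▸ h1)
    · exact Or.inl (h1'.trans h2)
    · exact Or.inr ⟨h1.trans h2, h1'.trans h2'⟩
  le_antisymm a b hab hba := by
    rcases hab with h1 | ⟨h1, h1'⟩
    · rcases hba with h2 | ⟨h2, h2'⟩
      · exact absurd ((a.2.trans_le h1).trans (b.2.trans_le h2)) (lt_irrefl _)
      · exact absurd ((h2 ▸ a.2 : ((b.1.1 : ℕ) : WithTop ℕ) < a.1.2).trans_le h1)
          (lt_irrefl _)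
    · rcases hba with h2 | ⟨h2, h2'⟩
      · exact absurd ((h1 ▸ b.2 : ((a.1.1 : ℕ) : WithTop ℕ) < b.1.2).trans_le h2)
          (lt_irrefl _)
      · exact Subtype.ext (Prod.ext h1 (le_antisymm h1' h2'))

/-- The element `(i,j)` of `Δ`, for `i < j < ω`. -/
def Dfin (i j : ℕ) (h : i < j) : DeltaP :=
  ⟨(i, (j : WithTop ℕ)), WithTop.coe_lt_coe.mpr h⟩

/-- The element `(i,ω)` of `Δ`. -/
def Dinf (i : ℕ) : DeltaP := ⟨(i, ⊤), WithTop.coe_lt_top i⟩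

lemma DeltaP.le_iff (a b : DeltaP) :
    a ≤ b ↔ (a.1.2 ≤ (b.1.1 : WithTop ℕ) ∨ (a.1.1 = b.1.1 ∧ a.1.2 ≤ b.1.2)) := Iff.rfl

lemma DeltaP.snd_cases (a : DeltaP) : a.1.2 = ⊤ ∨ ∃ l : ℕ, a.1.2 = (l : WithTop ℕ) := by
  rcases eq_or_ne a.1.2 ⊤ with h | h
  · exact Or.inl h
  · exact Or.inr ((WithTop.ne_top_iff_exists.mp h).imp fun l hl => hl.symm)

lemma stmt18_fTop {P : Type*} [SemilatticeInf P] (f : DeltaP → P) (b : DeltaP)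
    (hb : b.1.2 = ⊤) : f b = f (Dinf b.1.1) := by
  congr 1
  exact Subtype.ext (Prod.ext rfl hb)

lemma stmt18_fCoe {P : Type*} [SemilatticeInf P] (f : DeltaP → P)
    (hf : ∀ (i j : ℕ) (h : i < j), f (Dfin i j h) = f (Dinf i) ⊓ f (Dinf j))
    (b : DeltaP) (l : ℕ) (hl : b.1.2 = (l : WithTop ℕ)) :
    f b = f (Dinf b.1.1) ⊓ f (Dinf l) := by
  have h : b.1.1 < l := by
    have h2 := b.2
    rw [hl] at h2
    exact_mod_cast h2
  have hb : f b = f (Dfin b.1.1 l h) := congrArg f (Subtype.ext (Prod.ext rfl hl))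
  rw [hb, hf]

/-- for `f : Δ → P` with `f(i,j) = f(i,ω) ⊓ f(j,ω)`: meet-preserving ↔
order-preserving ↔ `f(i,j) ≤ f(k,ω)` ↔ `f(i,j) = f(i,k) ⊓ f(j,k)` (for all `i<j<k<ω`);
moreover such an `f` is injective iff `f(i,j) < f(j,k)` and `f(i,j) < f(i,k)` always. -/
theorem stmt_18 {P : Type*} [SemilatticeInf P] (f : DeltaP → P)
    (hf : ∀ (i j : ℕ) (h : i < j), f (Dfin i j h) = f (Dinf i) ⊓ f (Dinf j)) :
    (((∀ a b c : DeltaP, IsGLB {a, b} c → f c = f a ⊓ f b) ↔ Monotone f) ∧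
      (Monotone f ↔ ∀ (i j k : ℕ) (hij : i < j), j < k → f (Dfin i j hij) ≤ f (Dinf k)) ∧
      (Monotone f ↔ ∀ (i j k : ℕ) (hij : i < j) (hjk : j < k),
        f (Dfin i j hij) = f (Dfin i k (hij.trans hjk)) ⊓ f (Dfin j k hjk))) ∧
    ((∀ a b c : DeltaP, IsGLB {a, b} c → f c = f a ⊓ f b) →
      (Function.Injective f ↔ ∀ (i j k : ℕ) (hij : i < j) (hjk : j < k),
        f (Dfin i j hij) < f (Dfin j k hjk) ∧
          f (Dfin i j hij) < f (Dfin i k (hij.trans hjk)))) := by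
  have L1 : ∀ a : DeltaP, f a ≤ f (Dinf a.1.1) := by
    intro a
    rcases DeltaP.snd_cases a with h | ⟨l, hl⟩
    · exact (stmt18_fTop f a h).le
    · exact (stmt18_fCoe f hf a l hl).le.trans inf_le_left
  -- cond2 → monotone
  have B2 : (∀ (i j k : ℕ) (hij : i < j), j < k → f (Dfin i j hij) ≤ f (Dinf k)) →
      Monotone f := by
    intro h2
    have H : ∀ (a : DeltaP) (k : ℕ), a.1.2 ≤ (k : WithTop ℕ) → f a ≤ f (Dinf k) := by
      intro a k hk
      rcases DeltaP.snd_cases a with h | ⟨l, hl⟩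
      · rw [h] at hk
        exact absurd (top_le_iff.mp hk) (WithTop.coe_ne_top)
      · have hlk : l ≤ k := by rw [hl] at hk; exact_mod_cast hk
        have hal : a.1.1 < l := by
          have h2 := a.2; rw [hl] at h2; exact_mod_cast h2
        have ha : f a = f (Dfin a.1.1 l hal) :=
          congrArg f (Subtype.ext (Prod.ext rfl hl))
        rcases hlk.lt_or_eq with hlt | rfl
        · exact ha.le.trans (h2 _ _ _ hal hlt)
        · exact (stmt18_fCoe f hf a l hl).le.trans inf_le_right
    intro a b hab
    rcases (DeltaP.le_iff a b).mp hab with h1 | ⟨h1, h1'⟩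
    · rcases DeltaP.snd_cases b with hb | ⟨l, hl⟩
      · exact (H a b.1.1 h1).trans (stmt18_fTop f b hb).ge
      · have hbl : (b.1.1 : WithTop ℕ) ≤ (l : WithTop ℕ) := by
          have h2 := b.2; rw [hl] at h2; exact h2.le
        rw [stmt18_fCoe f hf b l hl]
        exact le_inf (H a b.1.1 h1) (H a l (h1.trans hbl))
    · rcases DeltaP.snd_cases b with hb | ⟨l, hl⟩
      · rw [stmt18_fTop f b hb, ← h1]
        exact L1 a
      · rw [stmt18_fCoe f hf b l hl, ← h1]
        exact le_inf (L1 a) (H a l (h1'.trans_eq hl))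
  -- monotone → cond2
  have B1 : Monotone f →
      ∀ (i j k : ℕ) (hij : i < j), j < k → f (Dfin i j hij) ≤ f (Dinf k) := by
    intro hm i j k hij hjk
    refine hm ((DeltaP.le_iff _ _).mpr (Or.inl ?_))
    show ((j : ℕ) : WithTop ℕ) ≤ ((k : ℕ) : WithTop ℕ)
    exact_mod_cast hjk.le
  -- glb facts
  have glb_left : ∀ a b : DeltaP, a ≤ b → IsGLB {a, b} a := by
    intro a b hab
    constructor
    · intro x hx
      rcases Set.mem_insert_iff.mp hx with rfl | hx
      · exact le_rfl
      · rw [Set.mem_singleton_iff] at hx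
        subst hx; exact hab
    · intro x hx
      exact hx (Set.mem_insert a {b})
  have glb_incomp : ∀ (a b : DeltaP) (h : a.1.1 < b.1.1), ¬ a ≤ b →
      IsGLB {a, b} (Dfin a.1.1 b.1.1 h) := by
    intro a b h hab
    have hba : (b.1.1 : WithTop ℕ) < a.1.2 := by
      rw [DeltaP.le_iff] at hab
      push_neg at hab
      exact hab.1
    constructor
    · intro x hx
      rcases Set.mem_insert_iff.mp hx with rfl | hx
      · exact (DeltaP.le_iff _ _).mpr (Or.inr ⟨rfl, hba.le⟩)
      · rw [Set.mem_singleton_iff] at hx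
        subst hx
        exact (DeltaP.le_iff _ _).mpr (Or.inl le_rfl)
    · intro x hx
      have hxa := (DeltaP.le_iff _ _).mp (hx (Set.mem_insert a {b}))
      have hxb := (DeltaP.le_iff _ _).mp (hx (Set.mem_insert_of_mem a rfl))
      rw [DeltaP.le_iff]
      rcases hxa with h1 | ⟨h1, h1'⟩
      · exact Or.inl h1
      · rcases hxb with h2 | ⟨h2, h2'⟩
        · exact Or.inr ⟨h1, h2⟩
        · exact absurd (h1.symm.trans h2) h.ne
  have MP1 : (∀ a b c : DeltaP, IsGLB {a, b} c → f c = f a ⊓ f b) → Monotone f := by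
    intro hmp a b hab
    have h := hmp a b a (glb_left a b hab)
    calc f a = f a ⊓ f b := h
      _ ≤ f b := inf_le_right
  have MP2 : Monotone f → ∀ a b c : DeltaP, IsGLB {a, b} c → f c = f a ⊓ f b := by
    intro hm a b c hc
    have hca : c ≤ a := hc.1 (Set.mem_insert a {b})
    have hcb : c ≤ b := hc.1 (Set.mem_insert_of_mem a rfl)
    refine le_antisymm (le_inf (hm hca) (hm hcb)) ?_
    by_cases hab : a ≤ b
    · rw [hc.unique (glb_left a b hab)]
      exact inf_le_left
    · by_cases hba : b ≤ a
      · have hg : IsGLB {a, b} b := by rw [Set.pair_comm]; exact glb_left b a hba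
        rw [hc.unique hg]
        exact inf_le_right
      · rcases lt_trichotomy a.1.1 b.1.1 with h | h | h
        · rw [hc.unique (glb_incomp a b h hab), hf]
          exact le_inf (inf_le_left.trans (L1 a)) (inf_le_right.trans (L1 b))
        · rcases le_total a.1.2 b.1.2 with h' | h'
          · exact absurd ((DeltaP.le_iff _ _).mpr (Or.inr ⟨h, h'⟩)) hab
          · exact absurd ((DeltaP.le_iff _ _).mpr (Or.inr ⟨h.symm, h'⟩)) hba
        · have hc' : IsGLB {b, a} c := by rwa [Set.pair_comm]
          rw [hc'.unique (glb_incomp b a h hba), hf]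
          exact le_inf (inf_le_right.trans (L1 b)) (inf_le_left.trans (L1 a))
  have C1 : Monotone f → ∀ (i j k : ℕ) (hij : i < j) (hjk : j < k),
      f (Dfin i j hij) = f (Dfin i k (hij.trans hjk)) ⊓ f (Dfin j k hjk) := by
    intro hm i j k hij hjk
    have hle : f (Dfin i j hij) ≤ f (Dinf k) := B1 hm i j k hij hjk
    rw [hf] at hle
    rw [hf, hf, hf]
    refine le_antisymm (le_inf (le_inf inf_le_left hle) (le_inf inf_le_right hle)) ?_
    exact le_inf (inf_le_left.trans inf_le_left) (inf_le_right.trans inf_le_left)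
  have C2 : (∀ (i j k : ℕ) (hij : i < j) (hjk : j < k),
      f (Dfin i j hij) = f (Dfin i k (hij.trans hjk)) ⊓ f (Dfin j k hjk)) → Monotone f := by
    intro h3
    refine B2 ?_
    intro i j k hij hjk
    calc f (Dfin i j hij) ≤ f (Dfin j k hjk) := (h3 i j k hij hjk).le.trans inf_le_right
      _ ≤ f (Dinf k) := by rw [hf]; exact inf_le_right
  refine ⟨⟨⟨MP1, MP2⟩, ⟨B1, B2⟩, ⟨C1, C2⟩⟩, ?_⟩
  intro hmp
  constructor
  · intro hinj i j k hij hjk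
    have hm := MP1 hmp
    constructor
    · refine lt_of_le_of_ne (hm ((DeltaP.le_iff _ _).mpr (Or.inl le_rfl))) fun he => ?_
      have h1 : i = j := congrArg (fun x => x.1.1) (hinj he)
      exact hij.ne h1
    · refine lt_of_le_of_ne
        (hm ((DeltaP.le_iff _ _).mpr (Or.inr ⟨rfl, show ((j : ℕ) : WithTop ℕ) ≤ ((k : ℕ) : WithTop ℕ) by exact_mod_cast hjk.le⟩))) fun he => ?_
      have h1 : ((j : ℕ) : WithTop ℕ) = (k : WithTop ℕ) :=
        congrArg (fun x => x.1.2) (hinj he)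
      have h2 : j = k := by exact_mod_cast h1
      exact hjk.ne h2
  · intro hs
    have F1 : ∀ i j k : ℕ, i < j → j < k → ¬ (f (Dinf j) ⊓ f (Dinf k) ≤ f (Dinf i)) := by
      intro i j k hij hjk hle
      have h1 : f (Dfin j k hjk) ≤ f (Dfin i j hij) := by
        rw [hf, hf]; exact le_inf hle inf_le_left
      exact ((hs i j k hij hjk).1.not_ge) h1
    have F2 : ∀ i j k : ℕ, i < j → j < k → ¬ (f (Dinf i) ⊓ f (Dinf k) ≤ f (Dinf j)) := by
      intro i j k hij hjk hle
      have h1 : f (Dfin i k (hij.trans hjk)) ≤ f (Dfin i j hij) := by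
        rw [hf, hf]; exact le_inf inf_le_left hle
      exact ((hs i j k hij hjk).2.not_ge) h1
    have incomp : ∀ i j : ℕ, i ≠ j → ¬ f (Dinf i) ≤ f (Dinf j) := by
      intro i j hne hle
      rcases hne.lt_or_gt with h | h
      · exact F2 i j (j + 1) h (Nat.lt_succ_self j) (inf_le_left.trans hle)
      · exact F1 j i (i + 1) h (Nat.lt_succ_self i) (inf_le_left.trans hle)
    have K : ∀ i j k : ℕ, i < j → f (Dinf i) ⊓ f (Dinf j) ≤ f (Dinf k) →
        k ≠ i → k ≠ j → j < k := by
      intro i j k hij hle hki hkj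
      rcases lt_trichotomy k i with h | h | h
      · exact absurd hle (F1 k i j h hij)
      · exact absurd h hki
      · rcases lt_trichotomy k j with h' | h' | h'
        · exact absurd hle (F2 i k j h h')
        · exact absurd h' hkj
        · exact h'
    intro a b hfab
    rcases DeltaP.snd_cases a with ha | ⟨j, hja⟩ <;> rcases DeltaP.snd_cases b with hb | ⟨l, hlb⟩
    · have heq : f (Dinf a.1.1) = f (Dinf b.1.1) := by
        rw [← stmt18_fTop f a ha, ← stmt18_fTop f b hb]; exact hfab
      have h1 : a.1.1 = b.1.1 := by
        by_contra hne
        exact incomp _ _ hne heq.le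
      exact Subtype.ext (Prod.ext h1 (ha.trans hb.symm))
    · exfalso
      have hkl : b.1.1 < l := by
        have h2 := b.2; rw [hlb] at h2; exact_mod_cast h2
      have heq : f (Dinf a.1.1) = f (Dinf b.1.1) ⊓ f (Dinf l) := by
        rw [← stmt18_fTop f a ha, ← stmt18_fCoe f hf b l hlb]; exact hfab
      by_cases h : a.1.1 = b.1.1
      · exact incomp a.1.1 l (by omega) (heq.le.trans inf_le_right)
      · exact incomp a.1.1 b.1.1 h (heq.le.trans inf_le_left)
    · exfalso
      have hij : a.1.1 < j := by
        have h2 := a.2; rw [hja] at h2; exact_mod_cast h2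
      have heq : f (Dinf b.1.1) = f (Dinf a.1.1) ⊓ f (Dinf j) := by
        rw [← stmt18_fTop f b hb, ← stmt18_fCoe f hf a j hja]; exact hfab.symm
      by_cases h : b.1.1 = a.1.1
      · exact incomp b.1.1 j (by omega) (heq.le.trans inf_le_right)
      · exact incomp b.1.1 a.1.1 h (heq.le.trans inf_le_left)
    · have hij : a.1.1 < j := by
        have h2 := a.2; rw [hja] at h2; exact_mod_cast h2
      have hkl : b.1.1 < l := by
        have h2 := b.2; rw [hlb] at h2; exact_mod_cast h2
      have heq : f (Dinf a.1.1) ⊓ f (Dinf j) = f (Dinf b.1.1) ⊓ f (Dinf l) := by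
        rw [← stmt18_fCoe f hf a j hja, ← stmt18_fCoe f hf b l hlb]; exact hfab
      have hjl : j = l := by
        by_contra hne
        by_cases hjk : j = b.1.1
        · have h1 : f (Dinf b.1.1) ⊓ f (Dinf l) ≤ f (Dinf a.1.1) := heq.ge.trans inf_le_left
          have h2 := K b.1.1 l a.1.1 hkl h1 (by omega) (by omega)
          omega
        · have h1 : f (Dinf b.1.1) ⊓ f (Dinf l) ≤ f (Dinf j) := heq.ge.trans inf_le_right
          have hlj : l < j := K b.1.1 l j hkl h1 hjk hne
          by_cases hli : l = a.1.1
          · have h2 : f (Dinf a.1.1) ⊓ f (Dinf j) ≤ f (Dinf b.1.1) := heq.le.trans inf_le_left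
            have h3 := K a.1.1 j b.1.1 hij h2 (by omega) (by omega)
            omega
          · have h2 : f (Dinf a.1.1) ⊓ f (Dinf j) ≤ f (Dinf l) := heq.le.trans inf_le_right
            have h3 := K a.1.1 j l hij h2 hli (fun h => hne h.symm)
            omega
      have hik : a.1.1 = b.1.1 := by
        by_contra hne
        have h1 : f (Dinf b.1.1) ⊓ f (Dinf l) ≤ f (Dinf a.1.1) := heq.ge.trans inf_le_left
        have h2 := K b.1.1 l a.1.1 hkl h1 hne (by omega)
        omega
      exact Subtype.ext (Prod.ext hik (by rw [hja, hlb, hjl]))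
end
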